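/- Fix k ≥ 1 and let C = (F, Init, P) be a deterministic transition system over input type I and state type S. If P is k-inductive in C, then the consecution check of depth 1 passes in the witness system C'_k, i.e., for every witness state w and all inputs i0, i1: P'_k i0 w implies P'_k i1 (F'_k i0 w). -/
import Mathlib


/-- A (deterministic) trace: `s (n+1) = F (x n) (s n)` for all `n`. -/
def IsTrace {I S : Type*} (F : I → S → S) (x : ℕ → I) (s : ℕ → S) : Prop :=
  ∀ n, s (n + 1) = F (x n) (s n)

/-- The system `(F, Init, P)` is safe: every initialized trace satisfies the property. -/
def Safe {I S : Type*} (F : I → S → S) (Init : Set S) (P : I → S → Prop) : Prop :=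
  ∀ x s, IsTrace F x s → s 0 ∈ Init → ∀ n, P (x n) (s n)

/-- `P` is `k`-inductive in `(F, Init, P)`: BMC of depth `k-1` and consecution of depth `k`. -/
def KInductive {I S : Type*} (k : ℕ) (F : I → S → S) (Init : Set S) (P : I → S → Prop) :
    Prop :=
  (∀ x s, IsTrace F x s → s 0 ∈ Init → ∀ n < k, P (x n) (s n)) ∧
  (∀ x s, IsTrace F x s → (∀ n < k, P (x n) (s n)) → P (x k) (s k))

/-- The state type of the witness system: `k` copies of the latches,
`k-1` copies of the inputs, and `k` initialization bits. -/
abbrev WState (k : ℕ) (I S : Type*) : Type _ :=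
  (Fin k → S) × (Fin (k - 1) → I) × (Fin k → Bool)

/-- The transition function of the witness system. -/
def WTrans {I S : Type*} (k : ℕ) (F : I → S → S) (i : I) (w : WState k I S) :
    WState k I S :=
  ⟨fun j => if _h : (j : ℕ) = k - 1 then F i (w.1 j) else w.1 ⟨(j : ℕ) + 1, by omega⟩,
   fun j => if _h : (j : ℕ) = k - 2 then i else w.2.1 ⟨(j : ℕ) + 1, by omega⟩,
   fun j => if _h : (j : ℕ) = k - 1 then w.2.2 j else w.2.2 ⟨(j : ℕ) + 1, by omega⟩⟩

/-- The initial states of the witness system. -/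
def WInit (k : ℕ) (hk : 0 < k) (I : Type*) {S : Type*} (Init : Set S) :
    Set (WState k I S) :=
  {w | w.1 ⟨k - 1, by omega⟩ ∈ Init ∧ w.2.2 ⟨k - 1, by omega⟩ = true ∧
       ∀ j : Fin k, (j : ℕ) < k - 1 → w.2.2 j = false}

/-- The extended input sequence `X`: `X j = x j` for `j < k - 1` and `X (k-1) = i`. -/
def WX {I : Type*} (k : ℕ) (i : I) (x : Fin (k - 1) → I) (j : Fin k) : I :=
  if h : (j : ℕ) = k - 1 then i else x ⟨(j : ℕ), by omega⟩

/-- The property of the witness system: the conjunction of `p0`–`p4`. -/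
def WProp {I S : Type*} (k : ℕ) (hk : 0 < k) (F : I → S → S) (Init : Set S)
    (P : I → S → Prop) (i : I) (w : WState k I S) : Prop :=
  (∀ j : Fin k, ∀ hj : (j : ℕ) < k - 1,
      w.2.2 j = true → w.2.2 ⟨(j : ℕ) + 1, by omega⟩ = true) ∧
  (∀ j : Fin k, ∀ hj : (j : ℕ) < k - 1,
      w.2.2 j = true → w.1 ⟨(j : ℕ) + 1, by omega⟩ = F (WX k i w.2.1 j) (w.1 j)) ∧
  (∀ j : Fin k, w.2.2 j = true → P (WX k i w.2.1 j) (w.1 j)) ∧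
  (∀ j : Fin k, 1 ≤ (j : ℕ) →
      w.2.2 ⟨(j : ℕ) - 1, by omega⟩ = false → w.2.2 j = true → w.1 j ∈ Init) ∧
  (w.2.2 ⟨k - 1, by omega⟩ = true)


/-! ### Auxiliary definitions and lemmas -/

lemma kind_safe {I S : Type*} {k : ℕ} {F : I → S → S} {Init : Set S} {P : I → S → Prop}
    (hind : KInductive k F Init P) : Safe F Init P := by
  obtain ⟨hbmc, hcons⟩ := hind
  intro x s htr h0 n
  induction n using Nat.strong_induction_on with
  | _ n ih =>
    by_cases hn : n < k
    · exact hbmc x s htr h0 n hn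
    · push_neg at hn
      have htr' : IsTrace F (fun j => x (n - k + j)) (fun j => s (n - k + j)) := by
        intro m
        have e : n - k + (m + 1) = (n - k + m) + 1 := by omega
        simp only [e]
        exact htr _
      have h := hcons _ _ htr' (fun j hj => ih (n - k + j) (by omega))
      simpa [Nat.sub_add_cancel hn] using h

/-- Auxiliary input sequence for the trace extracted from a witness state. -/
def auxX {I : Type*} (k m : ℕ) (i0 i1 : I) (x : Fin (k - 1) → I) (n : ℕ) : I :=
  if h : m + n < k - 1 then x ⟨m + n, h⟩ else if m + n = k - 1 then i0 else i1

/-- Auxiliary state sequence: iterate `F` along inputs `X` from `s0`. -/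
def auxS {I S : Type*} (F : I → S → S) (X : ℕ → I) (s0 : S) : ℕ → S
  | 0 => s0
  | n + 1 => F (X n) (auxS F X s0 n)

lemma auxS_trace {I S : Type*} (F : I → S → S) (X : ℕ → I) (s0 : S) :
    IsTrace F X (auxS F X s0) := fun _ => rfl

lemma wxE {I : Type*} {k : ℕ} (i : I) (x : Fin (k - 1) → I) (n : ℕ) (hn : n < k) :
    WX k i x ⟨n, hn⟩ = if _h : n = k - 1 then i else x ⟨n, by omega⟩ := rfl

/-- If `P` is `k`-inductive in `C`, then the consecution check of depth `1`
passes in the witness system `C'_k`. -/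
theorem witness_consecution (k : ℕ) (hk : 0 < k) {I S : Type*}
    (F : I → S → S) (Init : Set S) (P : I → S → Prop)
    (hind : KInductive k F Init P) :
    ∀ (w : WState k I S) (i0 i1 : I),
      WProp k hk F Init P i0 w → WProp k hk F Init P i1 (WTrans k F i0 w) := by
  classical
  intro w i0 i1 hw
  obtain ⟨ℓ, x, b⟩ := w
  obtain ⟨h0, h1, h2, h3, h4⟩ := hw
  -- nat-indexed versions of the hypotheses
  have H0 : ∀ (n : ℕ) (h1n : n < k - 1) (h2n : n + 1 < k),
      b ⟨n, by omega⟩ = true → b ⟨n + 1, h2n⟩ = true :=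
    fun n h1n h2n hb => h0 ⟨n, by omega⟩ h1n hb
  have H1 : ∀ (n : ℕ) (h1n : n < k - 1) (hkn : n < k) (h2n : n + 1 < k),
      b ⟨n, hkn⟩ = true →
      ℓ ⟨n + 1, h2n⟩ = F (WX k i0 x ⟨n, hkn⟩) (ℓ ⟨n, hkn⟩) :=
    fun n h1n hkn h2n hb => h1 ⟨n, hkn⟩ h1n hb
  have H2 : ∀ (n : ℕ) (hn : n < k),
      b ⟨n, hn⟩ = true → P (WX k i0 x ⟨n, hn⟩) (ℓ ⟨n, hn⟩) :=
    fun n hn hb => h2 ⟨n, hn⟩ hb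
  have H3 : ∀ (n : ℕ) (hn : n < k), 1 ≤ n → ∀ hn1 : n - 1 < k,
      b ⟨n - 1, hn1⟩ = false → b ⟨n, hn⟩ = true → ℓ ⟨n, hn⟩ ∈ Init :=
    fun n hn h1n hn1 hbf hbt => h3 ⟨n, hn⟩ h1n hbf hbt
  have H4 : ∀ hn : k - 1 < k, b ⟨k - 1, hn⟩ = true := fun hn => h4
  -- nat-indexed descriptions of the successor state
  have wtL : ∀ (n : ℕ) (hn : n < k), (WTrans k F i0 (ℓ, x, b)).1 ⟨n, hn⟩ =
      if _h : n = k - 1 then F i0 (ℓ ⟨n, hn⟩) else ℓ ⟨n + 1, by omega⟩ :=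
    fun n hn => rfl
  have wtX : ∀ (n : ℕ) (hn : n < k - 1), (WTrans k F i0 (ℓ, x, b)).2.1 ⟨n, hn⟩ =
      if _h : n = k - 2 then i0 else x ⟨n + 1, by omega⟩ :=
    fun n hn => rfl
  have wtB : ∀ (n : ℕ) (hn : n < k), (WTrans k F i0 (ℓ, x, b)).2.2 ⟨n, hn⟩ =
      if _h : n = k - 1 then b ⟨n, hn⟩ else b ⟨n + 1, by omega⟩ :=
    fun n hn => rfl
  -- monotonicity of the bits
  have hmono : ∀ c : ℕ, ∀ hc : c < k, ∀ a : ℕ, a ≤ c → ∀ ha : a < k,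
      b ⟨a, ha⟩ = true → b ⟨c, hc⟩ = true := by
    intro c
    induction c with
    | zero =>
      intro hc a hac ha hb
      have : a = 0 := by omega
      subst this; exact hb
    | succ c ihc =>
      intro hc a hac ha hb
      rcases Nat.eq_or_lt_of_le hac with h | h
      · subst h; exact hb
      · exact H0 c (by omega) hc (ihc (by omega) a (by omega) ha hb)
  have hex : ∃ n : ℕ, ∃ h : n < k, b ⟨n, h⟩ = true := ⟨k - 1, by omega, h4⟩
  set m := Nat.find hex with hm
  obtain ⟨hmk, hbm⟩ := Nat.find_spec hex
  have hmk' : m < k := hmk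
  have hbm' : b ⟨m, hmk'⟩ = true := hbm
  have hbfalse : ∀ j : ℕ, j < m → ∀ hj : j < k, b ⟨j, hj⟩ = false := by
    intro j hjm hj
    have hmin := Nat.find_min hex hjm
    exact Bool.eq_false_iff.mpr (fun hb => hmin ⟨hj, hb⟩)
  have hball : ∀ j : ℕ, m ≤ j → ∀ hj : j < k, b ⟨j, hj⟩ = true :=
    fun j hmj hj => hmono j hj m hmj hmk' hbm'
  -- the extracted trace
  set X : ℕ → I := auxX k m i0 i1 x with hX
  set s : ℕ → S := auxS F X (ℓ ⟨m, hmk'⟩) with hsdef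
  have htrace : IsTrace F X s := auxS_trace F X _
  have hXeq : ∀ (n : ℕ) (hn : m + n < k), X n = WX k i0 x ⟨m + n, hn⟩ := by
    intro n hn
    by_cases hc : m + n < k - 1
    · rw [hX, auxX, dif_pos hc, wxE i0 x (m + n) hn, dif_neg (by omega)]
    · have he : m + n = k - 1 := by omega
      rw [hX, auxX, dif_neg hc, if_pos he, wxE i0 x (m + n) hn, dif_pos he]
  have hs : ∀ (n : ℕ) (h : m + n < k), s n = ℓ ⟨m + n, h⟩ := by
    intro n
    induction n with
    | zero => intro h; rfl
    | succ n ih =>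
      intro h
      have hn : m + n < k := by omega
      have hb : b ⟨m + n, hn⟩ = true := hball (m + n) (by omega) hn
      have hstep := H1 (m + n) (by omega) hn (by omega) hb
      show F (X n) (s n) = ℓ ⟨m + (n + 1), h⟩
      rw [ih hn, hXeq n hn]
      exact hstep.symm
  have hP : ∀ (n : ℕ), m + n < k → P (X n) (s n) := by
    intro n hn
    rw [hs n hn, hXeq n hn]
    exact H2 (m + n) hn (hball (m + n) (by omega) hn)
  -- value of the trace at the tip
  have hXtop : X (k - m) = i1 := by
    rw [hX, auxX, dif_neg (by omega), if_neg (by omega)]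
  have hXpre : X (k - m - 1) = i0 := by
    rw [hX, auxX, dif_neg (by omega), if_pos (by omega)]
  have hs1 : s (k - m - 1) = ℓ ⟨k - 1, by omega⟩ := by
    have h' : m + (k - m - 1) < k := by omega
    rw [hs _ h']
    congr 1
    rw [Fin.mk.injEq]
    omega
  have hstep : s (k - m) = F i0 (ℓ ⟨k - 1, by omega⟩) := by
    have e : k - m = (k - m - 1) + 1 := by omega
    rw [e]
    show F (X (k - m - 1)) (s (k - m - 1)) = _
    rw [hXpre, hs1]
  -- the key fact, via k-induction
  have key : P i1 (F i0 (ℓ ⟨k - 1, by omega⟩)) := by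
    have hfin : P (X (k - m)) (s (k - m)) := by
      rcases Nat.eq_zero_or_pos m with hm0 | hm1
      · rw [(by omega : k - m = k)]
        exact hind.2 X s htrace (fun n hn => hP n (by omega))
      · have hbf : b ⟨m - 1, by omega⟩ = false := hbfalse (m - 1) (by omega) _
        have hinit : ℓ ⟨m, hmk'⟩ ∈ Init := H3 m hmk' hm1 (by omega) hbf hbm'
        have hs0 : s 0 ∈ Init := hinit
        exact kind_safe hind X s htrace hs0 (k - m)
    rw [hXtop, hstep] at hfin
    exact hfin
  -- now verify the five conjuncts
  refine ⟨?_, ?_, ?_, ?_, ?_⟩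
  · -- p0
    intro j hj hbj
    obtain ⟨jv, hjv⟩ := j
    simp only [Fin.val_mk] at hj hbj ⊢
    rw [wtB jv hjv, dif_neg (by omega)] at hbj
    by_cases h2' : jv + 1 = k - 1
    · rw [wtB (jv + 1) (by omega), dif_pos h2']
      exact hbj
    · rw [wtB (jv + 1) (by omega), dif_neg h2']
      exact H0 (jv + 1) (by omega) (by omega) hbj
  · -- p1
    intro j hj hbj
    obtain ⟨jv, hjv⟩ := j
    simp only [Fin.val_mk] at hj hbj ⊢
    rw [wtB jv hjv, dif_neg (by omega)] at hbj
    rw [wxE i1 (WTrans k F i0 (ℓ, x, b)).2.1 jv hjv, dif_neg (by omega),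
        wtX jv (by omega)]
    by_cases h2' : jv + 1 = k - 1
    · rw [dif_pos (by omega : jv = k - 2), wtL (jv + 1) (by omega), dif_pos h2',
          wtL jv hjv, dif_neg (by omega)]
    · rw [dif_neg (by omega : ¬ jv = k - 2), wtL (jv + 1) (by omega), dif_neg h2',
          wtL jv hjv, dif_neg (by omega)]
      have hp := H1 (jv + 1) (by omega) (by omega) (by omega) hbj
      rw [wxE i0 x (jv + 1) (by omega), dif_neg h2'] at hp
      exact hp
  · -- p2
    intro j hbj
    obtain ⟨jv, hjv⟩ := j
    by_cases hj : jv = k - 1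
    · subst hj
      rw [wxE i1 (WTrans k F i0 (ℓ, x, b)).2.1 (k - 1) hjv, dif_pos rfl,
          wtL (k - 1) hjv, dif_pos rfl]
      exact key
    · have hjlt : jv < k - 1 := by omega
      rw [wtB jv hjv, dif_neg hj] at hbj
      rw [wxE i1 (WTrans k F i0 (ℓ, x, b)).2.1 jv hjv, dif_neg hj,
          wtX jv (by omega), wtL jv hjv, dif_neg hj]
      by_cases h2' : jv + 1 = k - 1
      · rw [dif_pos (by omega : jv = k - 2)]
        have hp := H2 (jv + 1) (by omega) hbj
        rw [wxE i0 x (jv + 1) (by omega), dif_pos h2'] at hp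
        exact hp
      · rw [dif_neg (by omega : ¬ jv = k - 2)]
        have hp := H2 (jv + 1) (by omega) hbj
        rw [wxE i0 x (jv + 1) (by omega), dif_neg h2'] at hp
        exact hp
  · -- p3
    intro j hj1 hbf hbt
    obtain ⟨jv, hjv⟩ := j
    simp only [Fin.val_mk] at hj1 hbf hbt ⊢
    by_cases hj : jv = k - 1
    · exfalso
      rw [wtB (jv - 1) (by omega), dif_neg (by omega)] at hbf
      rw [hball (jv - 1 + 1) (by omega)] at hbf
      exact absurd hbf (by simp)
    · have hjlt : jv < k - 1 := by have := hjv; omega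
      rw [wtB (jv - 1) (by omega), dif_neg (by omega)] at hbf
      rw [wtB jv hjv, dif_neg hj] at hbt
      rw [wtL jv hjv, dif_neg hj]
      have e : jv - 1 + 1 = jv := by omega
      simp only [e] at hbf
      exact H3 (jv + 1) (by omega) (by omega) (by omega) hbf hbt
  · -- p4
    rw [wtB (k - 1) (by omega), dif_pos rfl]
    exact H4 _
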